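/- Let f be a bounded holomorphic function on the open unit disk 𝔻 such that the kernel K(λ, z) = (1 − conj(f(λ))·f(z))² / (1 − conj(λ)·z)² is positive semi-definite and f is not constant. Then the image f(𝔻) does not intersect the unit circle {w ∈ ℂ : |w| = 1}. -/

import Mathlib

open Complex Metric ComplexOrder

/-- A kernel `K` on the open unit disk is positive semi-definite if for every finite
family of points in the disk and complex coefficients, the associated quadratic form
is a nonnegative real number (using the partial order on `ℂ`). -/
def IsPSDKernelOnDisk (K : ℂ → ℂ → ℂ) : Prop :=
  ∀ (n : ℕ) (lam : Fin n → ℂ), (∀ i, ‖lam i‖ < 1) →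
    ∀ c : Fin n → ℂ,
      0 ≤ ∑ i, ∑ j, (starRingEnd ℂ) (c i) * c j * K (lam i) (lam j)

/-- If a complex-linear function `t ↦ t • v + d` of a real variable `t` is nonnegative
(in the complex order) for all real `t`, then `v = 0`. -/
lemma aux_lin_zero (v d : ℂ) (h : ∀ t : ℝ, 0 ≤ (t : ℂ) * v + d) : v = 0 := by
  have hre : ∀ t : ℝ, 0 ≤ t * v.re + d.re := by
    intro t
    have := (Complex.le_def.mp (h t)).1
    simpa using this
  have him : ∀ t : ℝ, t * v.im + d.im = 0 := by
    intro t
    have := (Complex.le_def.mp (h t)).2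
    simpa using this.symm
  have hvim : v.im = 0 := by
    have h0 := him 0
    have h1 := him 1
    linarith [h0, h1]
  have hvre : v.re = 0 := by
    by_contra hv
    have h1 := hre (-(d.re + 1) / v.re)
    rw [div_mul_cancel₀ _ hv] at h1
    linarith
  exact Complex.ext hvre hvim

/-- If the kernel `(1 - conj (f λ) * f z)² / (1 - conj λ * z)²` is positive
semi-definite and `f` is not constant on the disk, then `f(𝔻)` does not meet the
unit circle. -/
theorem image_misses_circle_of_psd_of_nonconstant
    (f : ℂ → ℂ) (hf : DifferentiableOn ℂ f (ball (0 : ℂ) 1))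
    (hb : ∃ M : ℝ, ∀ z ∈ ball (0 : ℂ) 1, ‖f z‖ ≤ M)
    (hpsd : IsPSDKernelOnDisk (fun lam z =>
        (1 - (starRingEnd ℂ) (f lam) * f z) ^ 2 / (1 - (starRingEnd ℂ) lam * z) ^ 2))
    (hnc : ¬ ∃ c : ℂ, ∀ z ∈ ball (0 : ℂ) 1, f z = c) :
    ∀ lam ∈ ball (0 : ℂ) 1, ‖f lam‖ ≠ 1 := by
  intro l hl hone
  apply hnc
  refine ⟨f l, fun z hz => ?_⟩
  -- conj (f l) * f l = 1
  have hcfl : (starRingEnd ℂ) (f l) * f l = 1 := by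
    rw [mul_comm, Complex.mul_conj]
    norm_cast
    rw [Complex.normSq_eq_norm_sq, hone]
    norm_num
  -- K(l, l) = 0
  have hK11 : (1 - (starRingEnd ℂ) (f l) * f l) ^ 2 / (1 - (starRingEnd ℂ) l * l) ^ 2 = 0 := by
    rw [hcfl]
    simp
  -- abbreviations
  set b := (1 - (starRingEnd ℂ) (f l) * f z) ^ 2 / (1 - (starRingEnd ℂ) l * z) ^ 2 with hbdef
  set b' := (1 - (starRingEnd ℂ) (f z) * f l) ^ 2 / (1 - (starRingEnd ℂ) z * l) ^ 2 with hb'def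
  set dd := (1 - (starRingEnd ℂ) (f z) * f z) ^ 2 / (1 - (starRingEnd ℂ) z * z) ^ 2 with hddef
  have hmem' : ∀ i, ‖(![l, z] : Fin 2 → ℂ) i‖ < 1 := by
    intro i
    fin_cases i
    · simpa using (mem_ball_zero_iff.mp hl)
    · simpa using (mem_ball_zero_iff.mp hz)
  have hw : ∀ w : ℂ, 0 ≤ (starRingEnd ℂ) w * b + w * b' + dd := by
    intro w
    have h := hpsd 2 ![l, z] hmem' ![w, 1]
    simp only [Fin.sum_univ_two, Matrix.cons_val_zero, Matrix.cons_val_one, Matrix.head_cons,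
      map_one, one_mul, mul_one] at h
    rw [hK11] at h
    convert h using 1
    ring
  -- real coefficients give b + b' = 0
  have hu : b + b' = 0 := by
    apply aux_lin_zero _ dd
    intro t
    have := hw (t : ℂ)
    rw [Complex.conj_ofReal] at this
    convert this using 1
    ring
  -- purely imaginary coefficients give I * (b' - b) = 0
  have hv : Complex.I * (b' - b) = 0 := by
    apply aux_lin_zero _ dd
    intro t
    have := hw ((t : ℂ) * Complex.I)
    rw [map_mul, Complex.conj_ofReal, Complex.conj_I] at this
    convert this using 1
    ring
  have hb'b : b' = b := by
    have := mul_eq_zero.mp hv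
    rcases this with h | h
    · exact absurd h Complex.I_ne_zero
    · linear_combination h
  have hb0 : b = 0 := by
    rw [hb'b] at hu
    linear_combination hu / 2
  -- denominator nonzero
  have hden : (1 - (starRingEnd ℂ) l * z) ≠ 0 := by
    intro h
    have h1 : (starRingEnd ℂ) l * z = 1 := by linear_combination -h
    have : ‖(starRingEnd ℂ) l * z‖ = 1 := by rw [h1]; simp
    rw [norm_mul, Complex.norm_conj] at this
    have hl1 : ‖l‖ < 1 := by simpa using (mem_ball_zero_iff.mp hl)
    have hz1 : ‖z‖ < 1 := by simpa using (mem_ball_zero_iff.mp hz)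
    nlinarith [norm_nonneg l, norm_nonneg z]
  have hnum : (1 - (starRingEnd ℂ) (f l) * f z) = 0 := by
    rw [hbdef] at hb0
    have := (div_eq_zero_iff.mp hb0).resolve_right (pow_ne_zero 2 hden)
    exact pow_eq_zero_iff (by norm_num) |>.mp this
  -- conclude f z = f l
  have hfl0 : (starRingEnd ℂ) (f l) ≠ 0 := by
    intro h
    have : ‖(starRingEnd ℂ) (f l)‖ = 0 := by rw [h]; simp
    rw [Complex.norm_conj, hone] at this
    norm_num at this
  apply mul_left_cancel₀ hfl0
  rw [hcfl]
  linear_combination -hnum
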